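/- Let H be a bialgebra over a field K of characteristic zero, n ≥ 1, and x ∈ H with Δ̃⁽ⁿ⁾(x) = 0. Then Δ̃⁽ⁿ⁻¹⁾(x) ∈ Prim(H)^{⊗n}. -/

import Mathlib

open TensorProduct


open TensorProduct

set_option maxHeartbeats 1000000
set_option synthInstance.maxHeartbeats 400000

universe u v

/-- A bundled `K`-module, used to form iterated tensor powers. -/
structure ModPack (K : Type u) [CommSemiring K] : Type (max u (v + 1)) where
  carrier : Type v
  [acg : AddCommGroup carrier]
  [mod : Module K carrier]

attribute [instance] ModPack.acg ModPack.mod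

/-- `tpk K H n` is the `(n+1)`-fold tensor power `H ⊗ (H ⊗ (⋯ ⊗ H))`. -/
noncomputable def tpk (K : Type u) [CommSemiring K]
    (H : Type v) [AddCommGroup H] [Module K H] : ℕ → ModPack.{u, v} K
  | 0 => ⟨H⟩
  | n + 1 => ⟨H ⊗[K] (tpk K H n).carrier⟩

/-- The reduced coproduct `Δ̃(x) = Δ(x) - 1 ⊗ x - x ⊗ 1 + ε(x) (1 ⊗ 1)`
(the unique linear map with `Δ̃(1) = 0` and `Δ̃(x) = Δ(x) - 1 ⊗ x - x ⊗ 1` on `ker ε`). -/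
noncomputable def redComul (K : Type u) [CommSemiring K]
    (H : Type v) [Ring H] [Bialgebra K H] : H →ₗ[K] H ⊗[K] H :=
  Coalgebra.comul
    - TensorProduct.mk K H H 1
    - (TensorProduct.mk K H H).flip 1
    + (Coalgebra.counit (R := K)).smulRight ((1 : H) ⊗ₜ[K] (1 : H))

/-- Applying `Δ̃` to the first tensor factor: `Δ̃ ⊗ id^{⊗ n}`. -/
noncomputable def frontMap (K : Type u) [CommSemiring K]
    (H : Type v) [Ring H] [Bialgebra K H] :
    (n : ℕ) → (tpk K H n).carrier →ₗ[K] (tpk K H (n + 1)).carrier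
  | 0 => redComul K H
  | n + 1 =>
      (TensorProduct.assoc K H H (tpk K H n).carrier).toLinearMap
        ∘ₗ TensorProduct.map (redComul K H) LinearMap.id

/-- The iterated reduced coproducts: `Δ̃⁽⁰⁾ = ρ` (with `ρ(x) = x - ε(x)1`), `Δ̃⁽¹⁾ = Δ̃`,
and `Δ̃⁽ᵏ⁺¹⁾ = (Δ̃ ⊗ id^{⊗ k}) ∘ Δ̃⁽ᵏ⁾`. -/
noncomputable def redIter (K : Type u) [CommSemiring K]
    (H : Type v) [Ring H] [Bialgebra K H] :
    (n : ℕ) → H →ₗ[K] (tpk K H n).carrier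
  | 0 => LinearMap.id - (Coalgebra.counit (R := K)).smulRight (1 : H)
  | 1 => redComul K H
  | n + 2 => frontMap K H (n + 1) ∘ₗ redIter K H (n + 1)

/-- `x` is a primitive element of the bialgebra `H`: `Δ(x) = x ⊗ 1 + 1 ⊗ x`. -/
def IsPrimitive (K : Type*) {H : Type*} [CommSemiring K] [Ring H] [Bialgebra K H] (x : H) : Prop :=
  Coalgebra.comul (R := K) x = x ⊗ₜ[K] (1 : H) + (1 : H) ⊗ₜ[K] x

/-- The image of `P ⊗ P ⊗ ⋯ ⊗ P` (`n+1` factors) inside the `(n+1)`-fold tensor power of `H`: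
the submodule `P^{⊗(n+1)}`. -/
noncomputable def nestSub (K : Type*) [Field K]
    {H : Type*} [AddCommGroup H] [Module K H] (P : Submodule K H) :
    (n : ℕ) → Submodule K (tpk K H n).carrier
  | 0 => P
  | n + 1 => LinearMap.range (TensorProduct.map P.subtype (nestSub K P n).subtype)

section Aux

variable (K : Type u) [Field K] (H : Type v) [Ring H] [Bialgebra K H]

lemma redComul_apply (x : H) :
    redComul K H x = Coalgebra.comul x - (1 : H) ⊗ₜ[K] x - x ⊗ₜ[K] (1 : H)
      + Coalgebra.counit (R := K) x • ((1 : H) ⊗ₜ[K] (1 : H)) := by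
  simp [redComul, LinearMap.sub_apply, LinearMap.add_apply, LinearMap.smulRight_apply]

lemma redComul_one : redComul K H 1 = 0 := by
  have h1 : Coalgebra.comul (R := K) (1 : H) = (1 : H) ⊗ₜ[K] (1 : H) := by
    rw [Bialgebra.comul_one]; exact Algebra.TensorProduct.one_def
  rw [redComul_apply, h1, Bialgebra.counit_one, one_smul]
  abel

/-- `ε'(x) = ε(x) • 1`. -/
noncomputable def epsOne : H →ₗ[K] H := (Coalgebra.counit (R := K)).smulRight 1

lemma rTensor_counit_redComul :
    (Coalgebra.counit (R := K)).rTensor H ∘ₗ redComul K H = 0 := by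
  ext x
  simp only [LinearMap.comp_apply, LinearMap.zero_apply, redComul_apply, map_sub, map_add,
    map_smul, LinearMap.rTensor_tmul, Coalgebra.rTensor_counit_comul, Bialgebra.counit_one]
  rw [TensorProduct.smul_tmul']
  simp

lemma lTensor_counit_redComul :
    (Coalgebra.counit (R := K)).lTensor H ∘ₗ redComul K H = 0 := by
  ext x
  simp only [LinearMap.comp_apply, LinearMap.zero_apply, redComul_apply, map_sub, map_add,
    map_smul, LinearMap.lTensor_tmul, Coalgebra.lTensor_counit_comul, Bialgebra.counit_one]
  rw [show ((1:H) ⊗ₜ[K] (Coalgebra.counit (R:=K) x)) = Coalgebra.counit (R:=K) x • ((1:H) ⊗ₜ[K] (1:K)) by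
    rw [← TensorProduct.tmul_smul, smul_eq_mul, mul_one]]
  abel

lemma rTensor_epsOne_redComul :
    (epsOne K H).rTensor H ∘ₗ redComul K H = 0 := by
  have h : (epsOne K H).rTensor H
      = (TensorProduct.mk K H H 1 ∘ₗ (TensorProduct.lid K H).toLinearMap)
          ∘ₗ (Coalgebra.counit (R := K)).rTensor H := by
    apply TensorProduct.ext'
    intro a b
    simp [epsOne, TensorProduct.smul_tmul', TensorProduct.tmul_smul]
  rw [h, LinearMap.comp_assoc, rTensor_counit_redComul, LinearMap.comp_zero]

lemma lTensor_epsOne_redComul :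
    (epsOne K H).lTensor H ∘ₗ redComul K H = 0 := by
  have h : (epsOne K H).lTensor H
      = ((TensorProduct.mk K H H).flip 1 ∘ₗ (TensorProduct.rid K H).toLinearMap)
          ∘ₗ (Coalgebra.counit (R := K)).lTensor H := by
    apply TensorProduct.ext'
    intro a b
    simp [epsOne, TensorProduct.smul_tmul', TensorProduct.tmul_smul]
  rw [h, LinearMap.comp_assoc, lTensor_counit_redComul, LinearMap.comp_zero]

lemma coassocRed :
    (TensorProduct.assoc K H H H).toLinearMap ∘ₗ (redComul K H).rTensor H ∘ₗ redComul K H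
      = (redComul K H).lTensor H ∘ₗ redComul K H := by
  ext x
  obtain ⟨S, hS⟩ := TensorProduct.exists_finset (R := K) (Coalgebra.comul (R := K) x)
  have hco : ∑ p ∈ S, (TensorProduct.assoc K H H H) ((Coalgebra.comul (R := K) p.1) ⊗ₜ[K] p.2)
      = ∑ p ∈ S, p.1 ⊗ₜ[K] (Coalgebra.comul (R := K) p.2) := by
    have h := Coalgebra.coassoc_apply (R := K) x
    rw [hS] at h
    simpa [map_sum] using h
  have hc1 : ∑ p ∈ S, Coalgebra.counit (R := K) p.1 • p.2 = x := by
    have h := Coalgebra.rTensor_counit_comul (R := K) x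
    rw [hS] at h
    have h2 := congrArg (TensorProduct.lid K H) h
    simpa [map_sum] using h2
  have hc2 : ∑ p ∈ S, Coalgebra.counit (R := K) p.2 • p.1 = x := by
    have h := Coalgebra.lTensor_counit_comul (R := K) x
    rw [hS] at h
    have h2 := congrArg (TensorProduct.rid K H) h
    simpa [map_sum] using h2
  have hD : redComul K H x
      = (∑ p ∈ S, p.1 ⊗ₜ[K] p.2) - (1 : H) ⊗ₜ[K] x - x ⊗ₜ[K] (1 : H)
        + Coalgebra.counit (R := K) x • ((1 : H) ⊗ₜ[K] (1 : H)) := by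
    rw [redComul_apply, hS]
  simp only [LinearMap.comp_apply, LinearEquiv.coe_coe]
  rw [hD]
  simp only [map_sub, map_add, map_smul, map_sum, LinearMap.rTensor_tmul,
    LinearMap.lTensor_tmul, redComul_one, TensorProduct.zero_tmul, TensorProduct.tmul_zero,
    sub_zero, add_zero, smul_zero]
  rw [hD]
  simp only [redComul_apply, TensorProduct.sub_tmul, TensorProduct.add_tmul,
    TensorProduct.tmul_sub, TensorProduct.tmul_add, TensorProduct.smul_tmul',
    TensorProduct.tmul_smul, TensorProduct.sum_tmul, TensorProduct.tmul_sum,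
    map_sub, map_add, map_smul, map_sum, TensorProduct.assoc_tmul]
  have e1 : ∑ p ∈ S, (Coalgebra.counit (R := K) p.1 • (1:H)) ⊗ₜ[K] ((1:H) ⊗ₜ[K] p.2)
      = (1:H) ⊗ₜ[K] ((1:H) ⊗ₜ[K] x) := by
    rw [← hc1, TensorProduct.tmul_sum, TensorProduct.tmul_sum]
    exact Finset.sum_congr rfl fun p _ => by
      rw [TensorProduct.smul_tmul, ← TensorProduct.tmul_smul]
  have e2 : ∑ p ∈ S, p.1 ⊗ₜ[K] ((Coalgebra.counit (R := K) p.2 • (1:H)) ⊗ₜ[K] (1:H))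
      = x ⊗ₜ[K] ((1:H) ⊗ₜ[K] (1:H)) := by
    rw [← hc2, TensorProduct.sum_tmul]
    exact Finset.sum_congr rfl fun p _ => by
      rw [← TensorProduct.smul_tmul', TensorProduct.tmul_smul, ← TensorProduct.smul_tmul']
  have e3 : (Coalgebra.counit (R := K) x • (1:H)) ⊗ₜ[K] ((1:H) ⊗ₜ[K] (1:H))
      = Coalgebra.counit (R := K) x • ((1:H) ⊗ₜ[K] ((1:H) ⊗ₜ[K] (1:H))) :=
    (TensorProduct.smul_tmul' _ _ _).symm
  have e4 : (1:H) ⊗ₜ[K] ((Coalgebra.counit (R := K) x • (1:H)) ⊗ₜ[K] (1:H))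
      = Coalgebra.counit (R := K) x • ((1:H) ⊗ₜ[K] ((1:H) ⊗ₜ[K] (1:H))) := by
    rw [← TensorProduct.smul_tmul', TensorProduct.tmul_smul]
  simp only [Finset.sum_sub_distrib, Finset.sum_add_distrib]
  rw [hco, e1, e2, e3, e4]
  abel


lemma assocNat {A B C C' : Type v} [AddCommGroup A] [Module K A] [AddCommGroup B] [Module K B]
    [AddCommGroup C] [Module K C] [AddCommGroup C'] [Module K C'] (f : C →ₗ[K] C') :
    (TensorProduct.assoc K A B C').toLinearMap ∘ₗ (f.lTensor (A ⊗[K] B))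
      = ((f.lTensor B).lTensor A) ∘ₗ (TensorProduct.assoc K A B C).toLinearMap := by
  apply TensorProduct.ext_threefold
  intro a b c
  simp

lemma redIter_succ (m : ℕ) :
    redIter K H (m + 1) = (redIter K H m).lTensor H ∘ₗ redComul K H := by
  induction m with
  | zero =>
    have h0 : redIter K H 0 = LinearMap.id - epsOne K H := rfl
    have h1 : redIter K H 1 = redComul K H := rfl
    rw [h0, h1]
    show (redComul K H : H →ₗ[K] H ⊗[K] H) = (LinearMap.id - epsOne K H).lTensor H ∘ₗ redComul K H
    rw [LinearMap.lTensor_sub, LinearMap.sub_comp, LinearMap.lTensor_id,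
      LinearMap.id_comp, lTensor_epsOne_redComul, sub_zero]
  | succ m ih =>
    have h2 : redIter K H (m + 2)
        = (TensorProduct.assoc K H H (tpk K H m).carrier).toLinearMap
            ∘ₗ (redComul K H).rTensor ((tpk K H m).carrier) ∘ₗ redIter K H (m + 1) := rfl
    rw [h2, ih]
    rw [show (redComul K H).rTensor ((tpk K H m).carrier)
          ∘ₗ ((redIter K H m).lTensor H ∘ₗ redComul K H)
        = ((redComul K H).rTensor ((tpk K H m).carrier) ∘ₗ (redIter K H m).lTensor H)
          ∘ₗ redComul K H from rfl]
    rw [LinearMap.rTensor_comp_lTensor, ← LinearMap.lTensor_comp_rTensor]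
    rw [show (TensorProduct.assoc K H H (tpk K H m).carrier).toLinearMap
          ∘ₗ ((redIter K H m).lTensor (H ⊗[K] H) ∘ₗ (redComul K H).rTensor H) ∘ₗ redComul K H
        = ((TensorProduct.assoc K H H (tpk K H m).carrier).toLinearMap
            ∘ₗ (redIter K H m).lTensor (H ⊗[K] H))
          ∘ₗ ((redComul K H).rTensor H ∘ₗ redComul K H) from rfl]
    rw [assocNat]
    rw [show (((redIter K H m).lTensor H).lTensor H
            ∘ₗ (TensorProduct.assoc K H H H).toLinearMap)
          ∘ₗ ((redComul K H).rTensor H ∘ₗ redComul K H)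
        = ((redIter K H m).lTensor H).lTensor H
          ∘ₗ ((TensorProduct.assoc K H H H).toLinearMap
              ∘ₗ (redComul K H).rTensor H ∘ₗ redComul K H) from rfl]
    rw [coassocRed]
    rw [show ((redIter K H m).lTensor H).lTensor H ∘ₗ (redComul K H).lTensor H ∘ₗ redComul K H
        = (((redIter K H m).lTensor H) ∘ₗ redComul K H).lTensor H ∘ₗ redComul K H by
      rw [LinearMap.lTensor_comp]; rfl]
    rfl

lemma rTensor_epsOne_redIter (m : ℕ) :
    (epsOne K H).rTensor ((tpk K H m).carrier) ∘ₗ redIter K H (m + 1) = 0 := by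
  rw [redIter_succ]
  rw [show (epsOne K H).rTensor ((tpk K H m).carrier)
        ∘ₗ ((redIter K H m).lTensor H ∘ₗ redComul K H)
      = ((epsOne K H).rTensor ((tpk K H m).carrier) ∘ₗ (redIter K H m).lTensor H)
        ∘ₗ redComul K H from rfl]
  rw [LinearMap.rTensor_comp_lTensor, ← LinearMap.lTensor_comp_rTensor]
  rw [LinearMap.comp_assoc, rTensor_epsOne_redComul, LinearMap.comp_zero]

lemma redComul_comp_epsOne : redComul K H ∘ₗ epsOne K H = 0 := by
  ext x
  simp [epsOne, redComul_one]

lemma epsOne_comp_epsOne : epsOne K H ∘ₗ epsOne K H = epsOne K H := by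
  ext x
  simp [epsOne, Bialgebra.counit_one, smul_smul]


section WithP

variable (P : Submodule K H)

lemma mem_P_iff (hP : ∀ x : H, x ∈ P ↔ IsPrimitive K x) (z : H) : z ∈ P ↔ (redComul K H z = 0 ∧ epsOne K H z = 0) := by
  constructor
  · intro h
    have hprim : Coalgebra.comul (R := K) z = z ⊗ₜ[K] (1 : H) + (1 : H) ⊗ₜ[K] z := (hP z).mp h
    have hεz : Coalgebra.counit (R := K) z • (1 : H) = 0 := by
      have h1 := Coalgebra.rTensor_counit_comul (R := K) z
      rw [hprim, map_add] at h1
      simp only [LinearMap.rTensor_tmul, Bialgebra.counit_one] at h1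
      have h2 : (Coalgebra.counit (R := K) z) ⊗ₜ[K] (1 : H) = 0 := by
        have := congrArg (fun t => t - (1 : K) ⊗ₜ[K] z) h1
        simpa using this
      have h3 := congrArg (TensorProduct.lid K H) h2
      simpa using h3
    constructor
    · rw [redComul_apply, hprim, TensorProduct.smul_tmul', hεz, TensorProduct.zero_tmul]
      abel
    · simpa [epsOne] using hεz
  · rintro ⟨h1, h2⟩
    apply (hP z).mpr
    have h2' : Coalgebra.counit (R := K) z • (1 : H) = 0 := by simpa [epsOne] using h2
    have h3 := redComul_apply K H z
    rw [h1] at h3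
    have h4 : Coalgebra.counit (R := K) z • ((1 : H) ⊗ₜ[K] (1 : H)) = 0 := by
      rw [TensorProduct.smul_tmul', h2', TensorProduct.zero_tmul]
    rw [h4, add_zero] at h3
    have h5 := congrArg (fun t => t + (1 : H) ⊗ₜ[K] z + z ⊗ₜ[K] (1 : H)) h3
    simp only [zero_add] at h5
    rw [IsPrimitive]
    rw [show Coalgebra.comul (R := K) z - 1 ⊗ₜ[K] z - z ⊗ₜ[K] 1 + 1 ⊗ₜ[K] z + z ⊗ₜ[K] 1
        = Coalgebra.comul (R := K) z by abel] at h5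
    rw [← h5]
    abel

lemma redComul_comp_subtype (hP : ∀ x : H, x ∈ P ↔ IsPrimitive K x) :
    redComul K H ∘ₗ P.subtype = 0 := by
  ext p
  exact ((mem_P_iff K H P hP p.1).mp p.2).1

lemma epsOne_comp_subtype (hP : ∀ x : H, x ∈ P ↔ IsPrimitive K x) :
    epsOne K H ∘ₗ P.subtype = 0 := by
  ext p
  exact ((mem_P_iff K H P hP p.1).mp p.2).2

end WithP

/-- All the slot-conditions (reduced coproduct and counit in each tensor slot), bundled as a
single linear map whose kernel will be the space of primitive tensors. -/
noncomputable def DD : (n : ℕ) → Σ (W : ModPack.{u, v} K), (tpk K H n).carrier →ₗ[K] W.carrier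
  | 0 => ⟨⟨(H ⊗[K] H) × H⟩, (redComul K H).prod (epsOne K H)⟩
  | n + 1 =>
      ⟨⟨((H ⊗[K] H) ⊗[K] (tpk K H n).carrier)
          × ((H ⊗[K] (tpk K H n).carrier) × (H ⊗[K] (DD n).1.carrier))⟩,
        ((redComul K H).rTensor ((tpk K H n).carrier)).prod
          (((epsOne K H).rTensor ((tpk K H n).carrier)).prod ((DD n).2.lTensor H))⟩

/-- The conditions tested by `DD n` on `Δ̃⁽ⁿ⁾ x` all factor through `Δ̃⁽ⁿ⁺¹⁾ x`. -/
lemma factD : ∀ n : ℕ, ∃ Φ : (tpk K H (n + 1)).carrier →ₗ[K] (DD K H n).1.carrier,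
    (DD K H n).2 ∘ₗ redIter K H n = Φ ∘ₗ redIter K H (n + 1) := by
  intro n
  induction n with
  | zero =>
    refine ⟨LinearMap.prod LinearMap.id 0, ?_⟩
    show ((redComul K H).prod (epsOne K H)) ∘ₗ (LinearMap.id - epsOne K H)
      = (LinearMap.prod LinearMap.id 0) ∘ₗ redComul K H
    rw [LinearMap.prod_comp, LinearMap.prod_comp]
    congr 1
    · rw [LinearMap.comp_sub, LinearMap.comp_id, redComul_comp_epsOne, sub_zero,
        LinearMap.id_comp]
    · rw [LinearMap.comp_sub, LinearMap.comp_id, epsOne_comp_epsOne, sub_self,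
        LinearMap.zero_comp]
  | succ n ih =>
    obtain ⟨Φ, hΦ⟩ := ih
    refine ⟨LinearMap.prod
        (TensorProduct.assoc K H H (tpk K H n).carrier).symm.toLinearMap
        (LinearMap.prod 0 (Φ.lTensor H)), ?_⟩
    show (((redComul K H).rTensor ((tpk K H n).carrier)).prod
          (((epsOne K H).rTensor ((tpk K H n).carrier)).prod ((DD K H n).2.lTensor H)))
        ∘ₗ (redIter K H (n + 1) : H →ₗ[K] H ⊗[K] (tpk K H n).carrier) = _
    erw [LinearMap.prod_comp, LinearMap.prod_comp, LinearMap.prod_comp, LinearMap.prod_comp]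
    congr 1
    · -- first slot
      have h2 : redIter K H (n + 2)
          = (TensorProduct.assoc K H H (tpk K H n).carrier).toLinearMap
              ∘ₗ (redComul K H).rTensor ((tpk K H n).carrier) ∘ₗ redIter K H (n + 1) := rfl
      rw [h2]
      erw [show (TensorProduct.assoc K H H (tpk K H n).carrier).symm.toLinearMap
            ∘ₗ (TensorProduct.assoc K H H (tpk K H n).carrier).toLinearMap
              ∘ₗ (redComul K H).rTensor ((tpk K H n).carrier) ∘ₗ redIter K H (n + 1)
          = ((TensorProduct.assoc K H H (tpk K H n).carrier).symm.toLinearMap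
              ∘ₗ (TensorProduct.assoc K H H (tpk K H n).carrier).toLinearMap)
              ∘ₗ (redComul K H).rTensor ((tpk K H n).carrier) ∘ₗ redIter K H (n + 1) from rfl]
      erw [show (TensorProduct.assoc K H H (tpk K H n).carrier).symm.toLinearMap
            ∘ₗ (TensorProduct.assoc K H H (tpk K H n).carrier).toLinearMap = LinearMap.id from
        LinearMap.ext fun y => (TensorProduct.assoc K H H (tpk K H n).carrier).symm_apply_apply y]
      erw [LinearMap.id_comp]
    congr 1
    · rw [rTensor_epsOne_redIter, LinearMap.zero_comp]
    · -- tail slots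
      rw [redIter_succ K H n, ← LinearMap.comp_assoc, ← LinearMap.lTensor_comp, hΦ,
        LinearMap.lTensor_comp, LinearMap.comp_assoc, ← redIter_succ K H (n + 1)]
      rfl


lemma ker_rT {A B T : Type*} [AddCommGroup A] [Module K A] [AddCommGroup B] [Module K B]
    [AddCommGroup T] [Module K T] (f : A →ₗ[K] B) :
    LinearMap.ker (f.rTensor T) = LinearMap.range ((LinearMap.ker f).subtype.rTensor T) :=
  (Module.Flat.rTensor_exact (R := K) T f.exact_subtype_ker_map).linearMap_ker_eq

lemma ker_lT {A B T : Type*} [AddCommGroup A] [Module K A] [AddCommGroup B] [Module K B]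
    [AddCommGroup T] [Module K T] (f : A →ₗ[K] B) :
    LinearMap.ker (f.lTensor T) = LinearMap.range ((LinearMap.ker f).subtype.lTensor T) :=
  (Module.Flat.lTensor_exact (R := K) T f.exact_subtype_ker_map).linearMap_ker_eq

lemma kerD (P : Submodule K H) (hP : ∀ x : H, x ∈ P ↔ IsPrimitive K x) :
    ∀ n : ℕ, LinearMap.ker (DD K H n).2 = nestSub K P n := by
  intro n
  induction n with
  | zero =>
    show LinearMap.ker ((redComul K H).prod (epsOne K H)) = P
    rw [LinearMap.ker_prod]
    ext z
    simp only [Submodule.mem_inf, LinearMap.mem_ker]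
    exact (mem_P_iff K H P hP z).symm
  | succ n ih =>
    apply le_antisymm
    · intro w hw
      rw [LinearMap.mem_ker] at hw
      rw [show (DD K H (n + 1)).2 = ((redComul K H).rTensor ((tpk K H n).carrier)).prod
          (((epsOne K H).rTensor ((tpk K H n).carrier)).prod ((DD K H n).2.lTensor H))
        from rfl] at hw
      have h1 : (redComul K H).rTensor ((tpk K H n).carrier) w = 0 := congrArg Prod.fst hw
      have h2 : (epsOne K H).rTensor ((tpk K H n).carrier) w = 0 :=
        congrArg (fun t => t.2.1) hw
      have h3 : ((DD K H n).2.lTensor H) w = 0 := congrArg (fun t => t.2.2) hw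
      set T := (tpk K H n).carrier with hT
      set Q := LinearMap.ker (redComul K H) with hQ
      obtain ⟨u, hu⟩ : w ∈ LinearMap.range (Q.subtype.rTensor T) := by
        rw [← ker_rT]; exact (LinearMap.mem_ker (f := (redComul K H).rTensor T)).mpr h1
      have h2' : ((epsOne K H ∘ₗ Q.subtype).rTensor T) u = 0 := by
        rw [LinearMap.rTensor_comp, LinearMap.comp_apply, hu]; exact h2
      obtain ⟨v, hv⟩ : u ∈ LinearMap.range
          ((LinearMap.ker (epsOne K H ∘ₗ Q.subtype)).subtype.rTensor T) := by
        rw [← ker_rT]; exact LinearMap.mem_ker.mpr h2'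
      let j : LinearMap.ker (epsOne K H ∘ₗ Q.subtype) →ₗ[K] P :=
        LinearMap.codRestrict P
          (Q.subtype ∘ₗ (LinearMap.ker (epsOne K H ∘ₗ Q.subtype)).subtype)
          (fun z => by
            apply (mem_P_iff K H P hP _).mpr
            refine ⟨LinearMap.mem_ker.mp z.1.2, ?_⟩
            have := LinearMap.mem_ker.mp z.2
            rwa [LinearMap.comp_apply] at this)
      have hPj : P.subtype ∘ₗ j
          = Q.subtype ∘ₗ (LinearMap.ker (epsOne K H ∘ₗ Q.subtype)).subtype :=
        LinearMap.subtype_comp_codRestrict _ _ _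
      have hw2 : w = (P.subtype.rTensor T) ((j.rTensor T) v) := by
        rw [← LinearMap.comp_apply, ← LinearMap.rTensor_comp, hPj, LinearMap.rTensor_comp,
          LinearMap.comp_apply, hv, hu]
      have hcomm : (DD K H n).2.lTensor H ∘ₗ P.subtype.rTensor T
          = P.subtype.rTensor (DD K H n).1.carrier ∘ₗ (DD K H n).2.lTensor P := by
        rw [LinearMap.lTensor_comp_rTensor, LinearMap.rTensor_comp_lTensor]
      have h3' : (P.subtype.rTensor (DD K H n).1.carrier)
          (((DD K H n).2.lTensor P) ((j.rTensor T) v)) = 0 := by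
        rw [← LinearMap.comp_apply, ← hcomm, LinearMap.comp_apply, ← hw2]; exact h3
      have hinj : Function.Injective (P.subtype.rTensor (DD K H n).1.carrier) :=
        Module.Flat.rTensor_preserves_injective_linearMap _ P.injective_subtype
      have h4 : ((DD K H n).2.lTensor P) ((j.rTensor T) v) = 0 := by
        apply hinj
        rw [h3', map_zero]
      have hrange : LinearMap.ker ((DD K H n).2.lTensor P)
          = LinearMap.range ((nestSub K P n).subtype.lTensor P) := by
        rw [ker_lT, ih]
      obtain ⟨z, hz⟩ : (j.rTensor T) v ∈ LinearMap.range
          ((nestSub K P n).subtype.lTensor P) := by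
        rw [← hrange]; exact LinearMap.mem_ker.mpr h4
      show w ∈ LinearMap.range (TensorProduct.map P.subtype (nestSub K P n).subtype)
      refine ⟨z, ?_⟩
      rw [← LinearMap.rTensor_comp_lTensor, LinearMap.comp_apply, hz, ← hw2]
    · rintro w ⟨z, rfl⟩
      rw [LinearMap.mem_ker]
      rw [show (DD K H (n + 1)).2 = ((redComul K H).rTensor ((tpk K H n).carrier)).prod
          (((epsOne K H).rTensor ((tpk K H n).carrier)).prod ((DD K H n).2.lTensor H))
        from rfl]
      have hDN : (DD K H n).2 ∘ₗ (nestSub K P n).subtype = 0 := by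
        ext y
        have : (y : (tpk K H n).carrier) ∈ LinearMap.ker (DD K H n).2 := by
          rw [ih]; exact y.2
        simpa using LinearMap.mem_ker.mp this
      have c1 : (redComul K H).rTensor ((tpk K H n).carrier)
          ∘ₗ TensorProduct.map P.subtype (nestSub K P n).subtype = 0 := by
        rw [show (redComul K H).rTensor ((tpk K H n).carrier)
            = TensorProduct.map (redComul K H) LinearMap.id from rfl,
          ← TensorProduct.map_comp, redComul_comp_subtype K H P hP,
          TensorProduct.map_zero_left]
      have c2 : (epsOne K H).rTensor ((tpk K H n).carrier)
          ∘ₗ TensorProduct.map P.subtype (nestSub K P n).subtype = 0 := by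
        rw [show (epsOne K H).rTensor ((tpk K H n).carrier)
            = TensorProduct.map (epsOne K H) LinearMap.id from rfl,
          ← TensorProduct.map_comp, epsOne_comp_subtype K H P hP,
          TensorProduct.map_zero_left]
      have c3 : (DD K H n).2.lTensor H
          ∘ₗ TensorProduct.map P.subtype (nestSub K P n).subtype = 0 := by
        rw [show (DD K H n).2.lTensor H
            = TensorProduct.map LinearMap.id (DD K H n).2 from rfl,
          ← TensorProduct.map_comp, hDN, TensorProduct.map_zero_right]
      refine Prod.ext ?_ (Prod.ext ?_ ?_)
      · exact congrArg (fun f => f z) (congrArg DFunLike.coe c1)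
      · exact congrArg (fun f => f z) (congrArg DFunLike.coe c2)
      · exact congrArg (fun f => f z) (congrArg DFunLike.coe c3)

end Aux

/-- If `Δ̃⁽ⁿ⁺¹⁾(x) = 0` then `Δ̃⁽ⁿ⁾(x) ∈ Prim(H)^{⊗(n+1)}`. -/
theorem statement13 {K : Type*} [Field K] [CharZero K]
    {H : Type*} [Ring H] [Bialgebra K H]
    (P : Submodule K H) (hP : ∀ x : H, x ∈ P ↔ IsPrimitive K x)
    (n : ℕ) (x : H) (hx : redIter K H (n + 1) x = 0) :
    redIter K H n x ∈ nestSub K P n := by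
  obtain ⟨Φ, hΦ⟩ := factD K H n
  have hzero : (DD K H n).2 (redIter K H n x) = 0 := by
    have h := LinearMap.congr_fun hΦ x
    rw [LinearMap.comp_apply, LinearMap.comp_apply, hx, map_zero] at h
    exact h
  rw [← kerD K H P hP n]
  exact LinearMap.mem_ker.mpr hzero
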